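/- arXiv:2107.13184 — 3 statements merged into one kernel-verified Lean document; each statement's English description precedes it below -/
import Mathlib

section
/- For all c > 0, Δx > 0 and k ∈ ℝ, the numerical dispersion error satisfies the expansion with explicit remainder bound |ε_{c,Δx}(k) − (c·k³·Δx²/24 − c·k⁵·Δx⁴/1920)| ≤ c·|k|⁷·Δx⁶/322560. -/
open Real

private lemma integ_bound (f g : ℝ → ℝ) (hf : ∀ t, HasDerivAt f (g t) t) (hg : Continuous g)
    (C : ℝ) (n : ℕ) (x : ℝ) (hx : 0 ≤ x)
    (hb : ∀ t ∈ Set.Icc (0:ℝ) x, |g t| ≤ C * t ^ n) :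
    |f x - f 0| ≤ C * x ^ (n + 1) / (n + 1) := by
  have h1 : f x - f 0 = ∫ t in (0:ℝ)..x, g t := by
    rw [intervalIntegral.integral_eq_sub_of_hasDerivAt (fun t _ => hf t)
      (hg.intervalIntegrable 0 x)]
  rw [h1]
  calc |∫ t in (0:ℝ)..x, g t| ≤ ∫ t in (0:ℝ)..x, |g t| :=
        intervalIntegral.abs_integral_le_integral_abs hx
    _ ≤ ∫ t in (0:ℝ)..x, C * t ^ n :=
        intervalIntegral.integral_mono_on hx (hg.abs.intervalIntegrable 0 x)
          ((continuous_const.mul (continuous_pow n)).intervalIntegrable 0 x) hb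
    _ = C * x ^ (n + 1) / (n + 1) := by
        rw [intervalIntegral.integral_const_mul, integral_pow]; ring

private lemma cos2 (x : ℝ) (hx : 0 ≤ x) : |Real.cos x - 1| ≤ x ^ 2 / 2 := by
  have hd : ∀ t : ℝ, HasDerivAt (fun t => Real.cos t) (-Real.sin t) t :=
    fun t => Real.hasDerivAt_cos t
  have h := integ_bound _ _ hd Real.continuous_sin.neg 1 1 x hx
    (fun t ht => by
      simpa [abs_neg] using (Real.abs_sin_le_abs (x := t)).trans_eq (abs_of_nonneg ht.1))
  simp only [Real.cos_zero] at h
  refine h.trans (le_of_eq ?_); push_cast; ring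

private lemma sin3 (x : ℝ) (hx : 0 ≤ x) : |Real.sin x - x| ≤ x ^ 3 / 6 := by
  have hd : ∀ t : ℝ, HasDerivAt (fun t => Real.sin t - t) (Real.cos t - 1) t := by
    intro t
    exact (Real.hasDerivAt_sin t).sub (hasDerivAt_id t)
  have h := integ_bound _ _ hd (Real.continuous_cos.sub continuous_const) (1/2) 2 x hx
    (fun t ht => by
      have := cos2 t ht.1; linarith)
  simp only [Real.sin_zero] at h
  norm_num at h
  refine h.trans (le_of_eq ?_); push_cast; ring

private lemma cos4 (x : ℝ) (hx : 0 ≤ x) : |Real.cos x - 1 + x ^ 2 / 2| ≤ x ^ 4 / 24 := by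
  have hd : ∀ t : ℝ, HasDerivAt (fun t => Real.cos t - 1 + t ^ 2 / 2) (-Real.sin t + t) t := by
    intro t
    have := ((Real.hasDerivAt_cos t).sub_const 1).add ((hasDerivAt_pow 2 t).div_const 2)
    refine this.congr_deriv ?_; push_cast; ring
  have h := integ_bound _ _ hd (Real.continuous_sin.neg.add continuous_id) (1/6) 3 x hx
    (fun t ht => by
      have := sin3 t ht.1
      have h2 : |-Real.sin t + t| = |Real.sin t - t| := by rw [← abs_neg]; ring_nf
      rw [h2]; linarith)
  simp only [Real.cos_zero] at h
  norm_num at h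
  refine h.trans (le_of_eq ?_); push_cast; ring

private lemma sin5 (x : ℝ) (hx : 0 ≤ x) :
    |Real.sin x - x + x ^ 3 / 6| ≤ x ^ 5 / 120 := by
  have hd : ∀ t : ℝ, HasDerivAt (fun t => Real.sin t - t + t ^ 3 / 6)
      (Real.cos t - 1 + t ^ 2 / 2) t := by
    intro t
    have := ((Real.hasDerivAt_sin t).sub (hasDerivAt_id t)).add
      ((hasDerivAt_pow 3 t).div_const 6)
    refine this.congr_deriv ?_; push_cast; ring
  have h := integ_bound _ _ hd
    ((Real.continuous_cos.sub continuous_const).add ((continuous_pow 2).div_const 2))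
    (1/24) 4 x hx
    (fun t ht => by have := cos4 t ht.1; linarith)
  simp only [Real.sin_zero] at h
  norm_num at h
  refine h.trans (le_of_eq ?_); push_cast; ring

private lemma cos6 (x : ℝ) (hx : 0 ≤ x) :
    |Real.cos x - 1 + x ^ 2 / 2 - x ^ 4 / 24| ≤ x ^ 6 / 720 := by
  have hd : ∀ t : ℝ, HasDerivAt (fun t => Real.cos t - 1 + t ^ 2 / 2 - t ^ 4 / 24)
      (-Real.sin t + t - t ^ 3 / 6) t := by
    intro t
    have := (((Real.hasDerivAt_cos t).sub_const 1).add
      ((hasDerivAt_pow 2 t).div_const 2)).sub ((hasDerivAt_pow 4 t).div_const 24)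
    refine this.congr_deriv ?_; push_cast; ring
  have h := integ_bound _ _ hd
    ((Real.continuous_sin.neg.add continuous_id).sub ((continuous_pow 3).div_const 6))
    (1/120) 5 x hx
    (fun t ht => by
      have := sin5 t ht.1
      have h2 : |-Real.sin t + t - t ^ 3 / 6| = |Real.sin t - t + t ^ 3 / 6| := by
        rw [← abs_neg]; ring_nf
      rw [h2]; linarith)
  simp only [Real.cos_zero] at h
  norm_num at h
  refine h.trans (le_of_eq ?_); push_cast; ring

private lemma sin7 (x : ℝ) (hx : 0 ≤ x) :
    |Real.sin x - (x - x ^ 3 / 6 + x ^ 5 / 120)| ≤ x ^ 7 / 5040 := by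
  have hd : ∀ t : ℝ, HasDerivAt (fun t => Real.sin t - t + t ^ 3 / 6 - t ^ 5 / 120)
      (Real.cos t - 1 + t ^ 2 / 2 - t ^ 4 / 24) t := by
    intro t
    have := (((Real.hasDerivAt_sin t).sub (hasDerivAt_id t)).add
      ((hasDerivAt_pow 3 t).div_const 6)).sub ((hasDerivAt_pow 5 t).div_const 120)
    refine this.congr_deriv ?_; push_cast; ring
  have h := integ_bound _ _ hd
    (((Real.continuous_cos.sub continuous_const).add ((continuous_pow 2).div_const 2)).sub
      ((continuous_pow 4).div_const 24))
    (1/720) 6 x hx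
    (fun t ht => by have := cos6 t ht.1; linarith)
  simp only [Real.sin_zero] at h
  norm_num at h
  have h2 : Real.sin x - (x - x ^ 3 / 6 + x ^ 5 / 120)
      = Real.sin x - x + x ^ 3 / 6 - x ^ 5 / 120 := by ring
  rw [h2]
  refine h.trans (le_of_eq ?_); push_cast; ring

private lemma sin7' (x : ℝ) :
    |Real.sin x - (x - x ^ 3 / 6 + x ^ 5 / 120)| ≤ |x| ^ 7 / 5040 := by
  rcases le_or_gt 0 x with hx | hx
  · rw [abs_of_nonneg hx]; exact sin7 x hx
  · have h := sin7 (-x) (by linarith)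
    rw [abs_of_neg hx]
    have h2 : Real.sin (-x) - (-x - (-x) ^ 3 / 6 + (-x) ^ 5 / 120)
        = -(Real.sin x - (x - x ^ 3 / 6 + x ^ 5 / 120)) := by
      rw [Real.sin_neg]; ring
    rw [h2, abs_neg] at h
    simpa using h

/-- The numerical dispersion error
`ε_{c,Δx}(k) = c k − (2c/Δx) sin(kΔx/2)` satisfies the expansion
`ε ≈ c k³ Δx²/24 − c k⁵ Δx⁴/1920` with remainder bounded by `c |k|⁷ Δx⁶ / 322560`. -/
theorem dispersion_error_expansion
    (c Δx k : ℝ) (hc : 0 < c) (hΔx : 0 < Δx) :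
    |(c * k - (2 * c / Δx) * Real.sin (k * Δx / 2))
        - (c * k^3 * Δx^2 / 24 - c * k^5 * Δx^4 / 1920)|
      ≤ c * |k|^7 * Δx^6 / 322560 := by
  set x := k * Δx / 2 with hxdef
  have key := sin7' x
  have hne : Δx ≠ 0 := ne_of_gt hΔx
  have h1 : (c * k - (2 * c / Δx) * Real.sin x)
      - (c * k^3 * Δx^2 / 24 - c * k^5 * Δx^4 / 1920)
      = -((2 * c / Δx) * (Real.sin x - (x - x ^ 3 / 6 + x ^ 5 / 120))) := by
    field_simp [hxdef]; ring
  rw [h1, abs_neg, abs_mul]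
  have h2 : |2 * c / Δx| = 2 * c / Δx := abs_of_pos (by positivity)
  rw [h2]
  have h3 : |x| ^ 7 = |k| ^ 7 * Δx ^ 7 / 128 := by
    rw [hxdef, abs_div, abs_mul, abs_of_pos hΔx, abs_of_pos (by norm_num : (0:ℝ) < 2)]
    ring
  calc 2 * c / Δx * |Real.sin x - (x - x ^ 3 / 6 + x ^ 5 / 120)|
      ≤ 2 * c / Δx * (|x| ^ 7 / 5040) := by
        apply mul_le_mul_of_nonneg_left key (by positivity)
    _ = c * |k|^7 * Δx^6 / 322560 := by
        rw [h3]; field_simp; ring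
end

section
/- For all a, b ∈ ℝ and ε ∈ [0, 1), every entry of the matrix R(a)·M(b,ε)⁻¹ − I₂ (where I₂ is the 2×2 identity matrix) has absolute value at most |a − b| + ε/(1−ε). In particular, when the phase error |a − b| and the relative dispersion error ε are small, the ideal correction operator is a near-identity map. -/
open Real Matrix

lemma abs_cos_sub_one_le (x : ℝ) : |Real.cos x - 1| ≤ |x| := by
  have h1 : Real.cos x ≤ 1 := Real.cos_le_one x
  have h2 : 1 - Real.cos x = 2 * Real.sin (x / 2) ^ 2 := by
    have hc := Real.cos_sq (x / 2)
    have h2x : 2 * (x / 2) = x := by ring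
    rw [h2x] at hc
    nlinarith [Real.sin_sq_add_cos_sq (x / 2)]
  have h3 : |Real.sin (x / 2)| ≤ |x / 2| := Real.abs_sin_le_abs
  have h4 : |Real.sin (x / 2)| ≤ 1 := Real.abs_sin_le_one _
  have h5 : Real.sin (x / 2) ^ 2 ≤ |Real.sin (x / 2)| := by
    nlinarith [abs_nonneg (Real.sin (x / 2)), sq_abs (Real.sin (x / 2))]
  rw [abs_sub_comm, abs_of_nonneg (by linarith)]
  have : |x / 2| = |x| / 2 := by rw [abs_div]; norm_num
  linarith [this ▸ h3]

/-- For `a, b ∈ ℝ` and `ε ∈ [0,1)`, every entry of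
`R(a) · M(b,ε)⁻¹ − I₂` has absolute value at most `|a − b| + ε/(1−ε)`:
the ideal correction operator is a near-identity map. -/
theorem ideal_correction_operator_near_identity
    (a b ε : ℝ) (hε0 : 0 ≤ ε) (hε1 : ε < 1) :
    ∀ i j : Fin 2,
      |((!![Real.cos a, Real.sin a; -Real.sin a, Real.cos a]) *
          (!![Real.cos b, Real.sin b / (1 - ε); -((1 - ε) * Real.sin b), Real.cos b])⁻¹
        - (1 : Matrix (Fin 2) (Fin 2) ℝ)) i j|
      ≤ |a - b| + ε / (1 - ε) := by
  have h1ε : (0:ℝ) < 1 - ε := by linarith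
  have hinv : (!![Real.cos b, Real.sin b / (1 - ε); -((1 - ε) * Real.sin b), Real.cos b])⁻¹
      = !![Real.cos b, -(Real.sin b / (1 - ε)); (1 - ε) * Real.sin b, Real.cos b] := by
    apply Matrix.inv_eq_right_inv
    ext i j
    fin_cases i <;> fin_cases j <;>
      (first
        | (simp [Matrix.mul_apply, Fin.sum_univ_two]; done)
        | (simp [Matrix.mul_apply, Fin.sum_univ_two];
           field_simp; nlinarith [Real.sin_sq_add_cos_sq b])
        | (field_simp [Matrix.mul_apply, Fin.sum_univ_two];
           nlinarith [Real.sin_sq_add_cos_sq b]))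
  rw [hinv]
  -- abbreviations
  have hsab : |Real.sin (a - b)| ≤ |a - b| := Real.abs_sin_le_abs
  have hcab : |Real.cos (a - b) - 1| ≤ |a - b| := abs_cos_sub_one_le (a - b)
  have hεle : ε ≤ ε / (1 - ε) := by
    rw [le_div_iff₀ h1ε]; nlinarith
  have hbnd : ∀ x y : ℝ, |Real.sin x * Real.sin y| ≤ 1 := by
    intro x y
    rw [abs_mul]
    exact mul_le_one₀ (Real.abs_sin_le_one x) (abs_nonneg _) (Real.abs_sin_le_one y)
  have hbnd2 : ∀ x y : ℝ, |Real.cos x * Real.sin y| ≤ 1 := by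
    intro x y
    rw [abs_mul]
    exact mul_le_one₀ (Real.abs_cos_le_one x) (abs_nonneg _) (Real.abs_sin_le_one y)
  have hεdiv : 0 ≤ ε / (1 - ε) := div_nonneg hε0 h1ε.le
  intro i j
  fin_cases i <;> fin_cases j <;>
    simp [Matrix.mul_apply, Fin.sum_univ_two, Matrix.one_apply]
  · -- (0,0): cos a cos b + sin a (1-ε) sin b - 1 = (cos(a-b)-1) - ε sin a sin b
    have he : Real.cos a * Real.cos b + Real.sin a * ((1 - ε) * Real.sin b) - 1
        = (Real.cos (a - b) - 1) + (-ε) * (Real.sin a * Real.sin b) := by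
      rw [Real.cos_sub]; ring
    rw [he]
    calc |(Real.cos (a - b) - 1) + (-ε) * (Real.sin a * Real.sin b)|
        ≤ |Real.cos (a - b) - 1| + |(-ε) * (Real.sin a * Real.sin b)| := abs_add_le _ _
      _ ≤ |a - b| + ε := by
          have : |(-ε) * (Real.sin a * Real.sin b)| ≤ ε := by
            rw [abs_mul, abs_neg, abs_of_nonneg hε0]
            nlinarith [hbnd a b, abs_nonneg (Real.sin a * Real.sin b)]
          linarith
      _ ≤ |a - b| + ε / (1 - ε) := by linarith
  · -- (0,1): -cos a sin b/(1-ε) + sin a cos b = sin(a-b) - (ε/(1-ε)) cos a sin b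
    have he : -(Real.cos a * (Real.sin b / (1 - ε))) + Real.sin a * Real.cos b
        = Real.sin (a - b) + (-(ε / (1 - ε))) * (Real.cos a * Real.sin b) := by
      rw [Real.sin_sub]; field_simp; ring
    rw [he]
    calc |Real.sin (a - b) + (-(ε / (1 - ε))) * (Real.cos a * Real.sin b)|
        ≤ |Real.sin (a - b)| + |(-(ε / (1 - ε))) * (Real.cos a * Real.sin b)| := abs_add_le _ _
      _ ≤ |a - b| + ε / (1 - ε) := by
          have : |(-(ε / (1 - ε))) * (Real.cos a * Real.sin b)| ≤ ε / (1 - ε) := by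
            rw [abs_mul, abs_neg, abs_of_nonneg hεdiv]
            nlinarith [hbnd2 a b, abs_nonneg (Real.cos a * Real.sin b)]
          linarith
  · -- (1,0): -sin a cos b + cos a (1-ε) sin b = -sin(a-b) - ε cos a sin b
    have he : -(Real.sin a * Real.cos b) + Real.cos a * ((1 - ε) * Real.sin b)
        = -Real.sin (a - b) + (-ε) * (Real.cos a * Real.sin b) := by
      rw [Real.sin_sub]; ring
    rw [he]
    calc |-Real.sin (a - b) + (-ε) * (Real.cos a * Real.sin b)|
        ≤ |-Real.sin (a - b)| + |(-ε) * (Real.cos a * Real.sin b)| := abs_add_le _ _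
      _ ≤ |a - b| + ε := by
          have h1 : |-Real.sin (a - b)| = |Real.sin (a - b)| := abs_neg _
          have : |(-ε) * (Real.cos a * Real.sin b)| ≤ ε := by
            rw [abs_mul, abs_neg, abs_of_nonneg hε0]
            nlinarith [hbnd2 a b, abs_nonneg (Real.cos a * Real.sin b)]
          rw [h1]; linarith
      _ ≤ |a - b| + ε / (1 - ε) := by linarith
  · -- (1,1): -sin a sin b/(1-ε)·(-1)... = cos(a-b)-1 + (ε/(1-ε)) sin a sin b
    have he : Real.sin a * (Real.sin b / (1 - ε)) + Real.cos a * Real.cos b - 1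
        = (Real.cos (a - b) - 1) + (ε / (1 - ε)) * (Real.sin a * Real.sin b) := by
      rw [Real.cos_sub]; field_simp; ring
    rw [he]
    calc |(Real.cos (a - b) - 1) + (ε / (1 - ε)) * (Real.sin a * Real.sin b)|
        ≤ |Real.cos (a - b) - 1| + |(ε / (1 - ε)) * (Real.sin a * Real.sin b)| := abs_add_le _ _
      _ ≤ |a - b| + ε / (1 - ε) := by
          have : |(ε / (1 - ε)) * (Real.sin a * Real.sin b)| ≤ ε / (1 - ε) := by
            rw [abs_mul, abs_of_nonneg hεdiv]
            nlinarith [hbnd a b, abs_nonneg (Real.sin a * Real.sin b)]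
          linarith
end

section
/- Let X be a normed vector space over ℝ, let F, G : X →L X be continuous linear maps, and set r := ‖G‖ and γ := ‖F − G‖ (operator norms). Let u : ℕ → X be the exact trajectory u(n+1) = F(u(n)), and for each k let u^k : ℕ → X satisfy the parareal iteration u^{k+1}(n+1) = G(u^{k+1}(n)) + F(u^k(n)) − G(u^k(n)) with u^k(0) = u(0) for all k. Then for every k and every N ≥ 1, the errors satisfy max_{0 ≤ n ≤ N} ‖u^{k+1}(n) − u(n)‖ ≤ γ · (∑_{j=0}^{N−1} r^j) · max_{0 ≤ n ≤ N−1} ‖u^k(n) − u(n)‖; when r ≠ 1 the factor ∑_{j=0}^{N−1} r^j equals (1 − r^N)/(1 − r). -/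
open Finset

/-- Parareal error amplification. With `F, G` continuous linear maps,
`r = ‖G‖`, `γ = ‖F − G‖`, exact trajectory `u(n+1) = F(u(n))` and parareal iterates
`u^{k+1}(n+1) = G(u^{k+1}(n)) + F(u^k(n)) − G(u^k(n))`, `u^k(0) = u(0)`, the max error
over `0 ≤ n ≤ N` at iteration `k+1` is bounded by `γ (∑_{j<N} r^j)` times the max
error over `0 ≤ n ≤ N−1` at iteration `k`; and for `r ≠ 1` the factor
`∑_{j<N} r^j = (1 − r^N)/(1 − r)`. -/
theorem parareal_error_amplification
    {X : Type*} [NormedAddCommGroup X] [NormedSpace ℝ X]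
    (F G : X →L[ℝ] X) (r γ : ℝ) (hr : r = ‖G‖) (hγ : γ = ‖F - G‖)
    (u : ℕ → X) (hu : ∀ n : ℕ, u (n + 1) = F (u n))
    (uk : ℕ → ℕ → X)
    (hinit : ∀ k : ℕ, uk k 0 = u 0)
    (hiter : ∀ k n : ℕ,
      uk (k + 1) (n + 1) = G (uk (k + 1) n) + F (uk k n) - G (uk k n)) :
    ∀ k N : ℕ, 1 ≤ N →
      ((Finset.Icc 0 N).sup' (Finset.nonempty_Icc.mpr (Nat.zero_le N))
          (fun n => ‖uk (k + 1) n - u n‖))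
        ≤ γ * (∑ j ∈ Finset.range N, r ^ j) *
          ((Finset.Icc 0 (N - 1)).sup' (Finset.nonempty_Icc.mpr (Nat.zero_le (N - 1)))
            (fun n => ‖uk k n - u n‖))
      ∧ (r ≠ 1 → (∑ j ∈ Finset.range N, r ^ j) = (1 - r ^ N) / (1 - r)) := by
  intro k N hN
  constructor
  · set M := ((Finset.Icc 0 (N - 1)).sup' (Finset.nonempty_Icc.mpr (Nat.zero_le (N - 1)))
      (fun n => ‖uk k n - u n‖)) with hM
    have hM0 : 0 ≤ M := le_trans (norm_nonneg (uk k 0 - u 0))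
      (Finset.le_sup' (f := fun n => ‖uk k n - u n‖)
        (Finset.mem_Icc.mpr ⟨Nat.zero_le 0, Nat.zero_le (N - 1)⟩))
    have hr0 : 0 ≤ r := hr ▸ norm_nonneg _
    have hγ0 : 0 ≤ γ := hγ ▸ norm_nonneg _
    have hsum_nonneg : ∀ m : ℕ, 0 ≤ ∑ j ∈ Finset.range m, r ^ j := fun m =>
      Finset.sum_nonneg fun j _ => pow_nonneg hr0 j
    have hsum_mono : ∀ m : ℕ, m ≤ N → (∑ j ∈ Finset.range m, r ^ j) ≤
        ∑ j ∈ Finset.range N, r ^ j := fun m hm =>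
      Finset.sum_le_sum_of_subset_of_nonneg (Finset.range_subset_range.mpr hm)
        (fun j _ _ => pow_nonneg hr0 j)
    have key : ∀ n : ℕ, n ≤ N →
        ‖uk (k + 1) n - u n‖ ≤ γ * (∑ j ∈ Finset.range n, r ^ j) * M := by
      intro n
      induction n with
      | zero =>
        intro _
        simp [hinit]
      | succ n ih =>
        intro hn1
        have hn : n ≤ N := Nat.le_of_succ_le hn1
        have hnN1 : n ≤ N - 1 := Nat.le_sub_one_of_lt hn1
        have hMn : ‖uk k n - u n‖ ≤ M :=
          Finset.le_sup' (f := fun n => ‖uk k n - u n‖)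
            (Finset.mem_Icc.mpr ⟨Nat.zero_le _, hnN1⟩)
        have hstep : uk (k + 1) (n + 1) - u (n + 1)
            = G (uk (k + 1) n - u n) + (F - G) (uk k n - u n) := by
          rw [hiter, hu]
          simp only [ContinuousLinearMap.sub_apply, map_sub]
          abel
        calc ‖uk (k + 1) (n + 1) - u (n + 1)‖
            ≤ ‖G (uk (k + 1) n - u n)‖ + ‖(F - G) (uk k n - u n)‖ := by
              rw [hstep]; exact norm_add_le _ _
          _ ≤ r * ‖uk (k + 1) n - u n‖ + γ * ‖uk k n - u n‖ := by
              gcongr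
              · rw [hr]; exact G.le_opNorm _
              · rw [hγ]; exact (F - G).le_opNorm _
          _ ≤ r * (γ * (∑ j ∈ Finset.range n, r ^ j) * M) + γ * M := by
              gcongr
              exact ih hn
          _ = γ * (∑ j ∈ Finset.range (n + 1), r ^ j) * M := by
              rw [geom_sum_succ]
              ring
    apply Finset.sup'_le
    intro n hn
    have hn' : n ≤ N := (Finset.mem_Icc.mp hn).2
    calc ‖uk (k + 1) n - u n‖ ≤ γ * (∑ j ∈ Finset.range n, r ^ j) * M := key n hn'
      _ ≤ γ * (∑ j ∈ Finset.range N, r ^ j) * M := by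
          gcongr
  · intro hrne
    rw [geom_sum_eq hrne]
    rw [← neg_sub (r ^ N) 1, ← neg_sub r 1, neg_div_neg_eq]
end
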